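/- If G is a bipartite graph whose complement is a circle graph, then G is itself a circle graph. -/

import Mathlib

open SimpleGraph

/-- The circle on which chord diagrams live (the unit circle as an additive circle). -/
abbrev Circ : Type := AddCircle (1 : ℝ)

/-- A circle representation of a graph `G`: each vertex `v` gets a chord with
distinct endpoints `p v` and `q v`, all `2|V|` endpoints are distinct, and two
distinct vertices are adjacent iff their chords cross (i.e. exactly one endpoint
of one chord lies strictly inside an arc determined by the other chord). -/
structure CircleRep (V : Type) (G : SimpleGraph V) where
  p : V → Circ
  q : V → Circ
  inj : Function.Injective (Sum.elim p q)
  adj : ∀ u v : V, G.Adj u v ↔ u ≠ v ∧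
    Xor' (sbtw (p v) (p u) (q v)) (sbtw (p v) (q u) (q v))

namespace CircleRep

variable {V : Type} {G : SimpleGraph V} (R : CircleRep V G)

/-- The two open arcs of the chord of `v`: `b = true` is the arc from `p v`
clockwise to `q v`, `b = false` is the other arc. -/
def ArcSet (v : V) (b : Bool) : Set Circ :=
  if b then {x | sbtw (R.p v) x (R.q v)} else {x | sbtw (R.q v) x (R.p v)}

/-- The arc `b` of the chord of `v` is empty: it contains both endpoints of no chord. -/
def ArcEmpty (v : V) (b : Bool) : Prop :=
  ∀ u : V, ¬ (R.p u ∈ R.ArcSet v b ∧ R.q u ∈ R.ArcSet v b)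

/-- A chord is peripheral if one of its arcs is empty. -/
def Peripheral (v : V) : Prop := ∃ b : Bool, R.ArcEmpty v b

/-- A set `T` of corner points satisfies the chord of `v` if each of the two
arcs of the chord contains a corner. -/
def SatChord (T : Finset Circ) (v : V) : Prop :=
  (∃ t ∈ T, t ∈ R.ArcSet v true) ∧ (∃ t ∈ T, t ∈ R.ArcSet v false)

/-- `T` is a satisfying set of corners: the corners are distinct from all chord
endpoints and every chord has a corner in each of its arcs. -/
def GoodCorners (T : Finset Circ) : Prop :=
  (∀ t ∈ T, ∀ v : V, t ≠ R.p v ∧ t ≠ R.q v) ∧ ∀ v : V, R.SatChord T v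

/-- The polygon number `ψ_r` of a circle representation: the minimum number of
corners that must be added to satisfy all chords. -/
noncomputable def polyNum : ℕ :=
  sInf {k | ∃ T : Finset Circ, T.card = k ∧ R.GoodCorners T}

/-- `c 0, …, c (ℓ-1)` is an ℓ-independent set in series: there is a point `x`
on the circle such that a clockwise traversal starting at `x` encounters both
endpoints of `c i` before both endpoints of `c j` whenever `i < j`. -/
def SeriesIndep {ℓ : ℕ} (c : Fin ℓ → V) : Prop :=
  Function.Injective c ∧ ∃ x : Circ,
    (∀ i : Fin ℓ, x ≠ R.p (c i) ∧ x ≠ R.q (c i)) ∧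
    ∀ i j : Fin ℓ, i < j →
      ∀ e ∈ ({R.p (c i), R.q (c i)} : Set Circ),
        ∀ f ∈ ({R.p (c j), R.q (c j)} : Set Circ), sbtw x e f

end CircleRep

/-- The polygon number `ψ(G)`: the minimum `k` such that `G` has a circle
representation together with `k` corners satisfying all chords. -/
noncomputable def polygonNumber {V : Type} (G : SimpleGraph V) : ℕ :=
  sInf {k | ∃ R : CircleRep V G, ∃ T : Finset Circ, T.card = k ∧ R.GoodCorners T}

/-- A permutation graph: a graph having a circle representation admitting two
corner points such that each chord has one corner in each of its arcs. -/
def IsPermutationGraph {V : Type} (G : SimpleGraph V) : Prop :=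
  ∃ R : CircleRep V G, ∃ T : Finset Circ, T.card = 2 ∧ R.GoodCorners T

/-- The clique cover number `κ(G)`: least `n` such that the vertex set can be
partitioned into `n` cliques. -/
noncomputable def cliqueCoverNumber {V : Type} (G : SimpleGraph V) : ℕ :=
  sInf {n | ∃ f : V → Fin n, ∀ u v : V, f u = f v → u = v ∨ G.Adj u v}

/-- The independence number `α(G)`. -/
noncomputable def indepNumber {V : Type} (G : SimpleGraph V) : ℕ :=
  sSup {n | ∃ s : Finset V, (∀ u ∈ s, ∀ v ∈ s, u ≠ v → ¬ G.Adj u v) ∧ s.card = n}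

/-- `A` is an asteroidal set of `G`: for every `a ∈ A`, any two vertices of
`A \ {a}` are connected by a path in `G - N[a]`. -/
def IsAsteroidal {V : Type} (G : SimpleGraph V) (A : Set V) : Prop :=
  ∀ a ∈ A, ∀ x ∈ A, ∀ y ∈ A, x ≠ a → y ≠ a →
    ∃ (hx : x ∈ {w | w ≠ a ∧ ¬ G.Adj a w}) (hy : y ∈ {w | w ≠ a ∧ ¬ G.Adj a w}),
      (G.induce {w | w ≠ a ∧ ¬ G.Adj a w}).Reachable ⟨x, hx⟩ ⟨y, hy⟩

/-- The asteroidal number `an(G)`: maximum size of an asteroidal set. -/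
noncomputable def asteroidalNumber {V : Type} (G : SimpleGraph V) : ℕ :=
  sSup {n | ∃ A : Finset V, IsAsteroidal G ↑A ∧ A.card = n}

/-- `G` is AT-free: it has no asteroidal triple. -/
def ATFree {V : Type} (G : SimpleGraph V) : Prop :=
  ¬ ∃ a b c : V, a ≠ b ∧ a ≠ c ∧ b ≠ c ∧ IsAsteroidal G {a, b, c}

/-- `G` is distance hereditary: in every connected induced subgraph, distances
agree with those of `G`. -/
def DistanceHereditary {V : Type} (G : SimpleGraph V) : Prop :=
  ∀ s : Set V, (G.induce s).Connected →
    ∀ u v : ↥s, (G.induce s).dist u v = G.dist (u : V) (v : V)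

/-- `{V1, V2}` is a split of `G`. -/
def IsSplit {V : Type} (G : SimpleGraph V) (V1 V2 : Set V) : Prop :=
  V1 ∪ V2 = Set.univ ∧ Disjoint V1 V2 ∧ 1 < V1.ncard ∧ 1 < V2.ncard ∧
    ∀ x ∈ V1, ∀ y ∈ V2,
      (G.Adj x y ↔ (∃ y' ∈ V2, G.Adj x y') ∧ (∃ x' ∈ V1, G.Adj x' y))


namespace Stmt7Aux

lemma xor_flip {P Q : Prop} : Xor' (¬P) (¬Q) ↔ Xor' P Q := by
  unfold Xor' Xor; tauto

lemma xor_not_right {P Q : Prop} : Xor' P (¬Q) ↔ ¬ Xor' P Q := by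
  unfold Xor' Xor; tauto

lemma xor_swap {P Q : Prop} : Xor' P Q ↔ Xor' Q P := by
  unfold Xor' Xor; tauto

lemma xor_self' {P : Prop} : ¬ Xor' P P := by unfold Xor' Xor; tauto

lemma lt_iff_not_lt {x y : ℝ} (h : x ≠ y) : x < y ↔ ¬ (y < x) :=
  ⟨fun h1 h2 => absurd h1 (not_lt_of_gt h2), fun h1 => h.lt_or_gt.resolve_right h1⟩

/-- the cyclic order of three reals on the circle, in window terms -/
def Cyc3 (a b c : ℝ) : Prop := (a < b ∧ b < c) ∨ (b < c ∧ c < a) ∨ (c < a ∧ a < b)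

lemma sbtw_of_lt {x y z : ℝ} (h1 : x < y) (h2 : y < z) (h3 : z < x + 1) :
    sbtw (x : Circ) (y : Circ) (z : Circ) := by
  rw [sbtw_iff_btw_not_btw]
  constructor
  · rw [QuotientAddGroup.btw_coe_iff]
    show toIcoMod one_pos x y ≤ toIocMod one_pos x z
    rw [(toIcoMod_eq_self _).mpr ⟨h1.le, by linarith⟩,
      (toIocMod_eq_self _).mpr ⟨by linarith, by linarith⟩]
    linarith
  · rw [QuotientAddGroup.btw_coe_iff]
    show ¬ (toIcoMod one_pos z y ≤ toIocMod one_pos z x)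
    have e1 : toIcoMod one_pos z y = y + 1 := by
      rw [toIcoMod_eq_iff]
      exact ⟨⟨by linarith, by linarith⟩, ⟨-1, by simp⟩⟩
    have e2 : toIocMod one_pos z x = x + 1 := by
      rw [toIocMod_eq_iff]
      exact ⟨⟨by linarith, by linarith⟩, ⟨-1, by simp⟩⟩
    rw [e1, e2]
    push_neg
    linarith

lemma cyc3_total {a b c : ℝ} (hab : a ≠ b) (hbc : b ≠ c) (hac : a ≠ c) :
    Cyc3 a b c ∨ Cyc3 c b a := by
  rcases hab.lt_or_gt with h1 | h1 <;> rcases hbc.lt_or_gt with h2 | h2 <;>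
    rcases hac.lt_or_gt with h3 | h3 <;> unfold Cyc3 <;> tauto

lemma sbtw_window {s x y z : ℝ} (hx : x ∈ Set.Ico s (s+1)) (hy : y ∈ Set.Ico s (s+1))
    (hz : z ∈ Set.Ico s (s+1)) (hxy : x ≠ y) (hyz : y ≠ z) (hxz : x ≠ z) :
    sbtw (x : Circ) (y : Circ) (z : Circ) ↔ Cyc3 x y z := by
  obtain ⟨hx1, hx2⟩ := hx; obtain ⟨hy1, hy2⟩ := hy; obtain ⟨hz1, hz2⟩ := hz
  have key : ∀ a b c : ℝ, a ∈ Set.Ico s (s+1) → b ∈ Set.Ico s (s+1) → c ∈ Set.Ico s (s+1) →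
      Cyc3 a b c → sbtw (a : Circ) (b : Circ) (c : Circ) := by
    rintro a b c ⟨ha1, ha2⟩ ⟨hb1, hb2⟩ ⟨hc1, hc2⟩ (⟨u1, u2⟩ | ⟨u1, u2⟩ | ⟨u1, u2⟩)
    · exact sbtw_of_lt u1 u2 (by linarith)
    · exact sbtw_cyclic_right (sbtw_of_lt u1 u2 (by linarith))
    · exact sbtw_cyclic_left (sbtw_of_lt u1 u2 (by linarith))
  constructor
  · intro h
    rcases cyc3_total hxy hyz hxz with hc | hc
    · exact hc
    · exact absurd h (sbtw_asymm (key _ _ _ ⟨hz1, hz2⟩ ⟨hy1, hy2⟩ ⟨hx1, hx2⟩ hc))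
  · exact key _ _ _ ⟨hx1, hx2⟩ ⟨hy1, hy2⟩ ⟨hz1, hz2⟩

lemma ivt_up (g : ℕ → ℕ) (hstep : ∀ i, g (i + 1) ≤ g i + 1) (k : ℕ) :
    ∀ b a, a ≤ b → g a ≤ k → k ≤ g b → ∃ i, a ≤ i ∧ i ≤ b ∧ g i = k := by
  intro b
  induction b with
  | zero =>
    intro a ha h1 h2
    have ha0 : a = 0 := by omega
    subst ha0
    exact ⟨0, le_refl _, le_refl _, by omega⟩
  | succ b ih =>
    intro a ha h1 h2
    rcases Nat.lt_or_ge b a with hab | hab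
    · have hab' : a = b + 1 := by omega
      subst hab'
      exact ⟨b + 1, le_refl _, le_refl _, by omega⟩
    · by_cases hk : k ≤ g b
      · obtain ⟨i, hi1, hi2, hi3⟩ := ih a hab h1 hk
        exact ⟨i, hi1, by omega, hi3⟩
      · have := hstep b
        exact ⟨b + 1, by omega, le_refl _, by omega⟩

lemma ivt_down (g : ℕ → ℕ) (hstep : ∀ i, g i ≤ g (i + 1) + 1) (k : ℕ) :
    ∀ b a, a ≤ b → k ≤ g a → g b ≤ k → ∃ i, a ≤ i ∧ i ≤ b ∧ g i = k := by
  intro b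
  induction b with
  | zero =>
    intro a ha h1 h2
    have ha0 : a = 0 := by omega
    subst ha0
    exact ⟨0, le_refl _, le_refl _, by omega⟩
  | succ b ih =>
    intro a ha h1 h2
    rcases Nat.lt_or_ge b a with hab | hab
    · have hab' : a = b + 1 := by omega
      subst hab'
      exact ⟨b + 1, le_refl _, le_refl _, by omega⟩
    · by_cases hk : g b ≤ k
      · obtain ⟨i, hi1, hi2, hi3⟩ := ih a hab h1 hk
        exact ⟨i, hi1, by omega, hi3⟩
      · have := hstep b
        exact ⟨b + 1, by omega, le_refl _, by omega⟩

end Stmt7Aux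

open Stmt7Aux

set_option maxHeartbeats 1600000

/-- a bipartite graph whose complement is a circle graph is itself
a circle graph. -/
theorem stmt7 {V : Type} [Fintype V] (G : SimpleGraph V)
    (hbip : ∃ A : Set V, (∀ u ∈ A, ∀ v ∈ A, ¬ G.Adj u v) ∧
      (∀ u ∉ A, ∀ v ∉ A, ¬ G.Adj u v))
    (hcirc : Nonempty (CircleRep V Gᶜ)) :
    Nonempty (CircleRep V G) := by
  classical
  obtain ⟨A, hA, hB⟩ := hbip
  obtain ⟨R⟩ := hcirc
  by_cases hV : IsEmpty V
  · exact ⟨⟨R.p, R.q, R.inj, fun u _ => isEmptyElim u⟩⟩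
  rw [not_isEmpty_iff] at hV
  haveI : Nonempty (V ⊕ V) := ⟨Sum.inl (Classical.arbitrary V)⟩
  set n := Fintype.card V with hn
  have hn1 : 1 ≤ n := Fintype.card_pos
  set N := 2 * n with hN
  -- lifted endpoints
  set P : V ⊕ V → Circ := Sum.elim R.p R.q with hP
  set E : V ⊕ V → ℝ := fun i => ((AddCircle.equivIco 1 0 (P i)) : ℝ) with hE
  have hEmem : ∀ i, E i ∈ Set.Ico (0:ℝ) 1 := by
    intro i
    have h := (AddCircle.equivIco 1 0 (P i)).2
    norm_num at h
    exact ⟨h.1, h.2⟩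
  have hEc : ∀ i, ((E i : ℝ) : Circ) = P i := by
    intro i
    exact (AddCircle.equivIco 1 0).symm_apply_apply (P i)
  have hEinj : Function.Injective E := by
    intro i j h
    apply R.inj
    show P i = P j
    rw [← hEc i, ← hEc j, h]
  have hEne : ∀ {i j : V ⊕ V}, i ≠ j → E i ≠ E j := fun h he => h (hEinj he)
  have hCne : ∀ {i j : V ⊕ V}, i ≠ j → ((E i : ℝ) : Circ) ≠ ((E j : ℝ) : Circ) := by
    intro i j h he
    rw [hEc i, hEc j] at he
    exact h (R.inj he)
  -- sorted endpoints
  set sF : Finset ℝ := Finset.image E Finset.univ with hsF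
  have hsmem : ∀ x ∈ sF, x ∈ Set.Ico (0:ℝ) 1 := by
    intro x hx
    obtain ⟨i, _, rfl⟩ := Finset.mem_image.mp hx
    exact hEmem i
  have hcard : sF.card = N := by
    rw [hsF, Finset.card_image_of_injective _ hEinj]
    simp [hN, hn, Fintype.card_sum, two_mul]
  set z := sF.orderIsoOfFin hcard with hz
  set zz : Fin N → ℝ := fun j => (z j : ℝ) with hzz
  have hzzmono : StrictMono zz := fun a b h => by
    exact_mod_cast z.strictMono h
  have hzzmem : ∀ j, zz j ∈ sF := fun j => (z j).2
  set σ : Fin N → V ⊕ V := fun j => Function.invFun E (zz j) with hσ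
  have hσE : ∀ j, E (σ j) = zz j := by
    intro j
    apply Function.invFun_eq
    obtain ⟨i, _, hi⟩ := Finset.mem_image.mp (hzzmem j)
    exact ⟨i, hi⟩
  have hσinj : Function.Injective σ := by
    intro a b h
    apply hzzmono.injective
    rw [← hσE a, ← hσE b, h]
  have hσbij : Function.Bijective σ := by
    rw [Fintype.bijective_iff_injective_and_card]
    exact ⟨hσinj, by simp [Fintype.card_sum, hN, hn, two_mul]⟩
  set idx : V ⊕ V → Fin N := Function.invFun σ with hidxdef
  have hidx : ∀ i, σ (idx i) = i := fun i => Function.invFun_eq (hσbij.2 i)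
  have hidxσ : ∀ j, idx (σ j) = j := fun j => hσinj (by rw [hidx])
  have hEidx : ∀ i, E i = zz (idx i) := by
    intro i
    have h := hσE (idx i)
    rwa [hidx i] at h
  -- counting function
  set σ' : ℕ → V ⊕ V := fun m => if h : m < N then σ ⟨m, h⟩ else Sum.inl (Classical.arbitrary V)
    with hσ'
  set indic : ℕ → ℕ := fun m => if Sum.elim id id (σ' m) ∈ A then 1 else 0 with hindic
  have hindic1 : ∀ m, indic m ≤ 1 := by
    intro m; rw [hindic]; dsimp only; split_ifs <;> omega
  set g : ℕ → ℕ := fun i => ∑ m ∈ Finset.Ico i (i + n), indic m with hg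
  set aA : ℕ := ∑ v : V, if v ∈ A then 1 else 0 with haA
  have hkey : ∀ i, g i + indic (i + n) = g (i + 1) + indic i := by
    intro i
    have h1 : ∑ m ∈ Finset.Ico i (i + n + 1), indic m = g i + indic (i + n) :=
      Finset.sum_Ico_succ_top (by omega) _
    have h2 : ∑ m ∈ Finset.Ico i (i + n + 1), indic m = indic i + g (i + 1) := by
      rw [Finset.sum_eq_sum_Ico_succ_bot (by omega)]
      congr 1
      show ∑ m ∈ Finset.Ico (i + 1) (i + n + 1), indic m = ∑ m ∈ Finset.Ico (i + 1) (i + 1 + n), indic m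
      rw [show i + n + 1 = i + 1 + n from by omega]
    omega
  have hstepup : ∀ i, g (i + 1) ≤ g i + 1 := by
    intro i
    have := hkey i
    have := hindic1 (i + n)
    have := hindic1 i
    omega
  have hstepdown : ∀ i, g i ≤ g (i + 1) + 1 := by
    intro i
    have := hkey i
    have := hindic1 (i + n)
    have := hindic1 i
    omega
  have htot : g 0 + g n = 2 * aA := by
    have hconsec : g 0 + g n = ∑ m ∈ Finset.Ico 0 N, indic m := by
      have h0 : g 0 = ∑ m ∈ Finset.Ico 0 n, indic m := by
        show ∑ m ∈ Finset.Ico 0 (0 + n), indic m = _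
        rw [Nat.zero_add]
      have hnn : g n = ∑ m ∈ Finset.Ico n N, indic m := by
        show ∑ m ∈ Finset.Ico n (n + n), indic m = _
        rw [show n + n = N from by omega]
      rw [h0, hnn, Finset.sum_Ico_consecutive indic (by omega) (by omega)]
    have hrange : ∑ m ∈ Finset.Ico 0 N, indic m = ∑ j : Fin N, indic (j : ℕ) := by
      rw [← Finset.range_eq_Ico, ← Fin.sum_univ_eq_sum_range]
    have hfix : ∀ j : Fin N, indic (j : ℕ) = (if Sum.elim id id (σ j) ∈ A then 1 else 0) := by
      intro j
      rw [hindic]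
      dsimp only
      rw [hσ']
      dsimp only
      simp only [dif_pos j.isLt]
    have hbij : ∑ j : Fin N, (if Sum.elim id id (σ j) ∈ A then 1 else 0)
        = ∑ i : V ⊕ V, (if Sum.elim id id i ∈ A then 1 else 0) :=
      Fintype.sum_bijective σ hσbij _ _ (fun j => rfl)
    have hsplit : ∑ i : V ⊕ V, (if Sum.elim id id i ∈ A then 1 else 0) = 2 * aA := by
      rw [Fintype.sum_sum_type]
      simp only [Sum.elim_inl, Sum.elim_inr, id]
      rw [haA, two_mul]
      rfl
    rw [hconsec, hrange, Finset.sum_congr rfl (fun j _ => hfix j), hbij, hsplit]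
  -- find the balanced window
  have hivt : ∃ i, 0 ≤ i ∧ i ≤ n ∧ g i = aA := by
    rcases le_or_gt (g 0) aA with h | h
    · exact ivt_up g hstepup aA n 0 (by omega) h (by omega)
    · exact ivt_down g hstepdown aA n 0 (by omega) (by omega) (by omega)
  obtain ⟨i0, -, hi0n, hgi0⟩ := hivt
  set W : Finset ℕ := Finset.Ico i0 (i0 + n) with hW
  set inW : V ⊕ V → Prop := fun i => (idx i : ℕ) ∈ W with hinW
  have hWN : ∀ m ∈ W, m < N := by
    intro m hm
    rw [hW, Finset.mem_Ico] at hm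
    omega
  set loIdx : Fin N := ⟨i0, by omega⟩ with hloIdx
  set hiIdx : Fin N := ⟨i0 + n - 1, by omega⟩ with hhiIdx
  set lo : ℝ := zz loIdx with hlo
  set hi : ℝ := zz hiIdx with hhi
  have hlohi : lo ≤ hi := hzzmono.monotone (show loIdx ≤ hiIdx by
    rw [hloIdx, hhiIdx, Fin.mk_le_mk]; omega)
  have hlo0 : (0:ℝ) ≤ lo := (hsmem _ (hzzmem loIdx)).1
  have hhi1 : hi < 1 := (hsmem _ (hzzmem hiIdx)).2
  have hvalW : ∀ i, inW i → lo ≤ E i ∧ E i ≤ hi := by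
    intro i hiw
    rw [hinW] at hiw
    rw [hW, Finset.mem_Ico] at hiw
    rw [hEidx i]
    constructor
    · exact hzzmono.monotone (show loIdx ≤ idx i by
        rw [hloIdx, Fin.le_def]; exact hiw.1)
    · exact hzzmono.monotone (show idx i ≤ hiIdx by
        rw [hhiIdx, Fin.le_def]; simp only; omega)
  have hvalO : ∀ i, ¬ inW i → E i < lo ∨ hi < E i := by
    intro i hiw
    simp only [hinW, hW, Finset.mem_Ico] at hiw
    push_neg at hiw
    rw [hEidx i]
    rcases Nat.lt_or_ge (idx i : ℕ) i0 with h | h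
    · left
      exact hzzmono (show idx i < loIdx by rw [hloIdx, Fin.lt_def]; exact h)
    · right
      have h2 := hiw h
      exact hzzmono (show hiIdx < idx i by rw [hhiIdx, Fin.lt_def]; simp only; omega)
  -- window sums
  have hWsum : ∀ f : V ⊕ V → ℕ,
      ∑ i : V ⊕ V, (if inW i then f i else 0) = ∑ m ∈ W, f (σ' m) := by
    intro f
    have h1 : ∑ m ∈ W, f (σ' m) = ∑ m ∈ Finset.range N, if m ∈ W then f (σ' m) else 0 := by
      rw [Finset.sum_ite_mem]
      congr 1
      rw [Finset.inter_eq_right.mpr (fun m hm => Finset.mem_range.mpr (hWN m hm))]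
    have h2 : ∑ m ∈ Finset.range N, (if m ∈ W then f (σ' m) else 0)
        = ∑ j : Fin N, (if (j : ℕ) ∈ W then f (σ' (j : ℕ)) else 0) :=
      (Fin.sum_univ_eq_sum_range _ N).symm
    have h3 : ∀ j : Fin N, (if (j : ℕ) ∈ W then f (σ' (j : ℕ)) else 0)
        = (if inW (σ j) then f (σ j) else 0) := by
      intro j
      have hσ'j : σ' (j : ℕ) = σ j := by
        rw [hσ']; dsimp only; rw [dif_pos j.isLt]
      rw [hσ'j]
      congr 1
      simp only [hinW, hidxσ j]
    have h4 : ∑ j : Fin N, (if inW (σ j) then f (σ j) else 0)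
        = ∑ i : V ⊕ V, (if inW i then f i else 0) :=
      Fintype.sum_bijective σ hσbij _ _ (fun j => rfl)
    rw [h1, h2, Finset.sum_congr rfl (fun j _ => h3 j), h4]
  have hWA : ∑ i : V ⊕ V, (if inW i then (if Sum.elim id id i ∈ A then 1 else 0) else 0) = aA := by
    rw [hWsum (fun i => if Sum.elim id id i ∈ A then 1 else 0)]
    rw [← hgi0, hg]
  have hW1 : ∑ i : V ⊕ V, (if inW i then 1 else 0) = n := by
    rw [hWsum (fun _ => 1)]
    rw [hW]
    simp
  -- degrees
  set d : V → ℕ := fun v =>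
    (if inW (Sum.inl v) then 1 else 0) + (if inW (Sum.inr v) then 1 else 0) with hd
  have hd2 : ∀ v, d v ≤ 2 := by
    intro v; rw [hd]; dsimp only; split_ifs <;> omega
  have hdA : ∑ v : V, (if v ∈ A then d v else 0) = aA := by
    rw [← hWA, Fintype.sum_sum_type, ← Finset.sum_add_distrib]
    apply Finset.sum_congr rfl
    intro v _
    simp only [Sum.elim_inl, Sum.elim_inr, id]
    by_cases hv : v ∈ A <;> by_cases h1 : inW (Sum.inl v) <;> by_cases h2 : inW (Sum.inr v) <;>
      simp [hd, hv, h1, h2]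
  have hdtot : ∑ v : V, d v = n := by
    rw [← hW1, Fintype.sum_sum_type, ← Finset.sum_add_distrib]
  have hsplitsum : ∀ f : V → ℕ, ∑ v : V, f v
      = ∑ v : V, (if v ∈ A then f v else 0) + ∑ v : V, (if v ∈ A then 0 else f v) := by
    intro f
    rw [← Finset.sum_add_distrib]
    apply Finset.sum_congr rfl
    intro v _
    split_ifs <;> omega
  have hcardA : ∑ v : V, (if v ∈ A then (1:ℕ) else 0) + ∑ v : V, (if v ∈ A then 0 else (1:ℕ)) = n := by
    rw [← hsplitsum (fun _ => 1)]
    simp [hn]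
  have hdB : ∑ v : V, (if v ∈ A then 0 else d v) = ∑ v : V, (if v ∈ A then 0 else 1) := by
    have := hsplitsum d
    omega
  -- crossing contradiction
  have hCC : ∀ v w : V, v ≠ w → ¬ G.Adj v w → inW (Sum.inl v) → inW (Sum.inr v) →
      ¬ inW (Sum.inl w) → ¬ inW (Sum.inr w) → False := by
    intro v w hvw hnadj h1 h2 h3 h4
    have hadj : Gᶜ.Adj w v := (G.compl_adj w v).mpr ⟨Ne.symm hvw, fun h => hnadj h.symm⟩
    obtain ⟨-, hxor⟩ := (R.adj w v).mp hadj
    have hpv : R.p v = ((E (Sum.inl v) : ℝ) : Circ) := (hEc (Sum.inl v)).symm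
    have hqv : R.q v = ((E (Sum.inr v) : ℝ) : Circ) := (hEc (Sum.inr v)).symm
    have hpw : R.p w = ((E (Sum.inl w) : ℝ) : Circ) := (hEc (Sum.inl w)).symm
    have hqw : R.q w = ((E (Sum.inr w) : ℝ) : Circ) := (hEc (Sum.inr w)).symm
    rw [hpv, hqv, hpw, hqw] at hxor
    have hmem : ∀ i, E i ∈ Set.Ico (0:ℝ) (0+1) := by
      intro i; rw [zero_add]; exact hEmem i
    have hne1 : (Sum.inl w : V ⊕ V) ≠ Sum.inl v := fun h => hvw (Sum.inl.inj h).symm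
    have hne2 : (Sum.inr w : V ⊕ V) ≠ Sum.inl v := Sum.inr_ne_inl
    have hne3 : (Sum.inl w : V ⊕ V) ≠ Sum.inr v := Sum.inl_ne_inr
    have hne4 : (Sum.inr w : V ⊕ V) ≠ Sum.inr v := fun h => hvw (Sum.inr.inj h).symm
    rw [sbtw_window (hmem _) (hmem _) (hmem _) (hEne hne1).symm (hEne hne3)
      (hEne (Sum.inl_ne_inr)), sbtw_window (hmem _) (hmem _) (hmem _) (hEne hne2).symm
      (hEne hne4) (hEne (Sum.inl_ne_inr))] at hxor
    have hx1 := hvalW _ h1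
    have hy1 := hvalW _ h2
    have hiff : ∀ u : ℝ, (u < lo ∨ hi < u) →
        (Cyc3 (E (Sum.inl v)) u (E (Sum.inr v)) ↔ E (Sum.inr v) < E (Sum.inl v)) := by
      intro u hu
      unfold Cyc3
      constructor
      · rintro (⟨a, b⟩ | ⟨a, b⟩ | ⟨a, b⟩)
        · rcases hu with h | h
          · linarith [hx1.1]
          · linarith [hy1.2]
        · exact b
        · exact a
      · intro h
        rcases hu with h' | h'
        · exact Or.inr (Or.inl ⟨by linarith [hy1.1], h⟩)
        · exact Or.inr (Or.inr ⟨h, by linarith [hx1.2]⟩)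
    rw [hiff _ (hvalO _ h3), hiff _ (hvalO _ h4)] at hxor
    exact xor_self' hxor
  -- each chord has exactly one endpoint in the window
  have hclass : ∀ (C : V → Prop), (∀ a ∈ {v | C v}, ∀ b ∈ {v | C v}, ¬ G.Adj a b) →
      (∑ v : V, (if C v then d v else 0)) = (∑ v : V, (if C v then 1 else 0)) →
      ∀ v, C v → d v = 1 := by
    intro C hCind hCsum v hv
    by_contra hne
    have hd2' : ∀ u, inW (Sum.inl u) → inW (Sum.inr u) → d u = 2 := by
      intro u a b; rw [hd]; dsimp only; rw [if_pos a, if_pos b]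
    have hdd : ∀ u, d u = 2 → inW (Sum.inl u) ∧ inW (Sum.inr u) := by
      intro u h; rw [hd] at h; dsimp only at h
      constructor <;> by_contra hc <;> rw [if_neg hc] at h <;> split_ifs at h <;> omega
    have hdd0 : ∀ u, d u = 0 → ¬ inW (Sum.inl u) ∧ ¬ inW (Sum.inr u) := by
      intro u h; rw [hd] at h; dsimp only at h
      constructor <;> intro hc <;> rw [if_pos hc] at h <;> split_ifs at h <;> omega
    rcases Nat.lt_or_ge (d v) 1 with h0 | h2'
    · have h0 : d v = 0 := by omega
      by_cases hall : ∀ u, C u → d u ≤ 1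
      · have hlt : ∑ u : V, (if C u then d u else 0) < ∑ u : V, (if C u then 1 else 0) := by
          apply Finset.sum_lt_sum
          · intro i _
            split_ifs with h
            · exact hall i h
            · omega
          · exact ⟨v, Finset.mem_univ v, by rw [if_pos hv, if_pos hv, h0]; omega⟩
        omega
      · push_neg at hall
        obtain ⟨u, hCu, hu2⟩ := hall
        have hu2' : d u = 2 := by have := hd2 u; omega
        have huv : u ≠ v := fun h => by rw [h, h0] at hu2'; omega
        obtain ⟨a1, a2⟩ := hdd u hu2'
        obtain ⟨b1, b2⟩ := hdd0 v h0
        exact hCC u v huv (hCind u hCu v hv) a1 a2 b1 b2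
    · have h2 : d v = 2 := by have := hd2 v; omega
      by_cases hall : ∀ u, C u → 1 ≤ d u
      · have hlt : ∑ u : V, (if C u then 1 else 0) < ∑ u : V, (if C u then d u else 0) := by
          apply Finset.sum_lt_sum
          · intro i _
            split_ifs with h
            · exact hall i h
            · omega
          · exact ⟨v, Finset.mem_univ v, by rw [if_pos hv, if_pos hv, h2]; omega⟩
        omega
      · push_neg at hall
        obtain ⟨u, hCu, hu0⟩ := hall
        have hu0' : d u = 0 := by omega
        have huv : v ≠ u := fun h => by rw [← h, h2] at hu0'; omega
        obtain ⟨a1, a2⟩ := hdd v h2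
        obtain ⟨b1, b2⟩ := hdd0 u hu0'
        exact hCC v u huv (hCind v hv u hCu) a1 a2 b1 b2
  have hcA : ∑ v : V, (if v ∈ A then (1:ℕ) else 0) = aA := by rw [haA]
  have hA1 : ∀ v, v ∈ A → d v = 1 := by
    apply hclass (fun v => v ∈ A) (fun a ha b hb => hA a ha b hb)
    rw [hdA, hcA]
  have hB1 : ∀ v, v ∉ A → d v = 1 := by
    apply hclass (fun v => v ∉ A) (fun a ha b hb => hB a ha b hb)
    refine (Finset.sum_congr rfl fun v _ => ?_).trans
      (hdB.trans (Finset.sum_congr rfl fun v _ => ?_)) <;>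
      by_cases h : v ∈ A <;> simp [h]
  have hone : ∀ v : V, d v = 1 := by
    intro v
    by_cases hv : v ∈ A
    · exact hA1 v hv
    · exact hB1 v hv
  have honeW : ∀ v : V, (inW (Sum.inl v) ∧ ¬ inW (Sum.inr v)) ∨
      (¬ inW (Sum.inl v) ∧ inW (Sum.inr v)) := by
    intro v
    have h := hone v
    simp only [hd] at h
    by_cases h1 : inW (Sum.inl v) <;> by_cases h2 : inW (Sum.inr v)
    · rw [if_pos h1, if_pos h2] at h; omega
    · exact Or.inl ⟨h1, h2⟩
    · exact Or.inr ⟨h1, h2⟩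
    · rw [if_neg h1, if_neg h2] at h; omega
  have hPl : ∀ v : V, P (Sum.inl v) = R.p v := fun _ => rfl
  have hPr : ∀ v : V, P (Sum.inr v) = R.q v := fun _ => rfl
  -- window endpoint / outer endpoint of each chord
  set αr : V → ℝ := fun v => if inW (Sum.inl v) then E (Sum.inl v) else E (Sum.inr v) with hαr
  set βr : V → ℝ := fun v => if inW (Sum.inl v) then E (Sum.inr v) else E (Sum.inl v) with hβr
  set β : V → ℝ := fun v => if βr v < lo then βr v + 1 else βr v with hβ
  have hαrW : ∀ v, lo ≤ αr v ∧ αr v ≤ hi := by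
    intro v
    rcases honeW v with ⟨h1, h2⟩ | ⟨h1, h2⟩
    · rw [hαr]; dsimp only; rw [if_pos h1]; exact hvalW _ h1
    · rw [hαr]; dsimp only; rw [if_neg h1]; exact hvalW _ h2
  have hβrO : ∀ v, βr v < lo ∨ hi < βr v := by
    intro v
    rcases honeW v with ⟨h1, h2⟩ | ⟨h1, h2⟩
    · rw [hβr]; dsimp only; rw [if_pos h1]; exact hvalO _ h2
    · rw [hβr]; dsimp only; rw [if_neg h1]; exact hvalO _ h1
  have hβr01 : ∀ v, 0 ≤ βr v ∧ βr v < 1 := by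
    intro v; rw [hβr]; dsimp only; split_ifs
    · exact ⟨(hEmem _).1, (hEmem _).2⟩
    · exact ⟨(hEmem _).1, (hEmem _).2⟩
  have hβW : ∀ v, hi < β v ∧ β v < lo + 1 := by
    intro v
    rw [hβ]; dsimp only
    rcases hβrO v with h | h
    · rw [if_pos h]
      constructor
      · linarith [(hβr01 v).1, hhi1]
      · linarith
    · rw [if_neg (by linarith [hlohi] : ¬ (βr v < lo))]
      constructor
      · exact h
      · linarith [(hβr01 v).2, hlo0]
  have hβc : ∀ v, ((β v : ℝ) : Circ) = ((βr v : ℝ) : Circ) := by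
    intro v
    rw [hβ]; dsimp only
    split_ifs with h
    · exact AddCircle.coe_add_period 1 (βr v)
    · rfl
  have hunord : ∀ v, ((((αr v : ℝ) : Circ) = R.p v ∧ ((β v : ℝ) : Circ) = R.q v) ∨
      (((αr v : ℝ) : Circ) = R.q v ∧ ((β v : ℝ) : Circ) = R.p v)) := by
    intro v
    rw [hβc v, hαr, hβr]; dsimp only
    by_cases h : inW (Sum.inl v)
    · rw [if_pos h, if_pos h]
      exact Or.inl ⟨(hEc (Sum.inl v)).trans (hPl v), (hEc (Sum.inr v)).trans (hPr v)⟩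
    · rw [if_neg h, if_neg h]
      exact Or.inr ⟨(hEc (Sum.inr v)).trans (hPr v), (hEc (Sum.inl v)).trans (hPl v)⟩
  -- distinctness
  have hαrne : ∀ u v, u ≠ v → αr u ≠ αr v := by
    intro u v huv
    rw [hαr]; dsimp only
    split_ifs <;> apply hEne <;> simp [huv]
  have hβrne : ∀ u v, u ≠ v → βr u ≠ βr v := by
    intro u v huv
    rw [hβr]; dsimp only
    split_ifs <;> apply hEne <;> simp [huv]
  have hβne : ∀ u v, u ≠ v → β u ≠ β v := by
    intro u v huv h
    have hc : ((βr u : ℝ) : Circ) = ((βr v : ℝ) : Circ) := by rw [← hβc, ← hβc, h]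
    have hm1 : βr u ∈ Set.Ico (0:ℝ) (0 + 1) := ⟨(hβr01 u).1, by linarith [(hβr01 u).2]⟩
    have hm2 : βr v ∈ Set.Ico (0:ℝ) (0 + 1) := ⟨(hβr01 v).1, by linarith [(hβr01 v).2]⟩
    exact hβrne u v huv ((AddCircle.coe_eq_coe_iff_of_mem_Ico hm1 hm2).mp hc)
  have hmemα : ∀ v, αr v ∈ Set.Ico lo (lo + 1) :=
    fun v => ⟨(hαrW v).1, by linarith [(hαrW v).2, hhi1, hlo0]⟩
  have hmemβ : ∀ v, β v ∈ Set.Ico lo (lo + 1) :=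
    fun v => ⟨by linarith [hlohi, (hβW v).1], (hβW v).2⟩
  -- sbtw evaluators
  have hseα : ∀ c d x : ℝ, lo ≤ c → c ≤ hi → hi < d → d < lo + 1 → lo ≤ x → x ≤ hi →
      x ≠ c → (sbtw (c : Circ) (x : Circ) (d : Circ) ↔ c < x) := by
    intro c d x h1 h2 h3 h4 h5 h6 h7
    rw [sbtw_window ⟨h1, by linarith⟩ ⟨h5, by linarith⟩ ⟨by linarith, h4⟩ (Ne.symm h7)
      (ne_of_lt (by linarith)) (ne_of_lt (by linarith))]
    unfold Cyc3
    constructor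
    · rintro (⟨a, b⟩ | ⟨a, b⟩ | ⟨a, b⟩)
      · exact a
      · linarith
      · linarith
    · intro h
      exact Or.inl ⟨h, by linarith⟩
  have hseβ : ∀ c d x : ℝ, lo ≤ c → c ≤ hi → hi < d → d < lo + 1 → hi < x → x < lo + 1 →
      x ≠ d → (sbtw (c : Circ) (x : Circ) (d : Circ) ↔ x < d) := by
    intro c d x h1 h2 h3 h4 h5 h6 h7
    rw [sbtw_window ⟨h1, by linarith⟩ ⟨by linarith, h6⟩ ⟨by linarith, h4⟩
      (ne_of_lt (by linarith)) h7 (ne_of_lt (by linarith))]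
    unfold Cyc3
    constructor
    · rintro (⟨a, b⟩ | ⟨a, b⟩ | ⟨a, b⟩)
      · exact b
      · linarith
      · linarith
    · intro h
      exact Or.inl ⟨by linarith, h⟩
  have hseα' : ∀ c d x : ℝ, lo ≤ c → c ≤ hi → hi < d → d < lo + 1 → lo ≤ x → x ≤ hi →
      x ≠ c → (sbtw (d : Circ) (x : Circ) (c : Circ) ↔ x < c) := by
    intro c d x h1 h2 h3 h4 h5 h6 h7
    rw [sbtw_window ⟨by linarith, h4⟩ ⟨h5, by linarith⟩ ⟨h1, by linarith⟩
      (ne_of_gt (by linarith)) h7 (ne_of_gt (by linarith))]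
    unfold Cyc3
    constructor
    · rintro (⟨a, b⟩ | ⟨a, b⟩ | ⟨a, b⟩)
      · linarith
      · exact a
      · linarith
    · intro h
      exact Or.inr (Or.inl ⟨h, by linarith⟩)
  have hseβ' : ∀ c d x : ℝ, lo ≤ c → c ≤ hi → hi < d → d < lo + 1 → hi < x → x < lo + 1 →
      x ≠ d → (sbtw (d : Circ) (x : Circ) (c : Circ) ↔ d < x) := by
    intro c d x h1 h2 h3 h4 h5 h6 h7
    rw [sbtw_window ⟨by linarith, h4⟩ ⟨by linarith, h6⟩ ⟨h1, by linarith⟩ (Ne.symm h7)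
      (ne_of_gt (by linarith)) (ne_of_gt (by linarith))]
    unfold Cyc3
    constructor
    · rintro (⟨a, b⟩ | ⟨a, b⟩ | ⟨a, b⟩)
      · linarith
      · linarith
      · exact b
    · intro h
      exact Or.inr (Or.inr ⟨by linarith, h⟩)
  -- old adjacency in real terms
  have hOld : ∀ u v, u ≠ v → (Gᶜ.Adj u v ↔ Xor' (αr v < αr u) (β u < β v)) := by
    intro u v huv
    rw [R.adj u v, and_iff_right huv]
    have ha := lt_iff_not_lt (hαrne u v huv)
    have hb := lt_iff_not_lt (hβne u v huv)
    rcases hunord v with ⟨hv1, hv2⟩ | ⟨hv1, hv2⟩ <;> rcases hunord u with ⟨hu1, hu2⟩ | ⟨hu1, hu2⟩ <;>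
      rw [← hv1, ← hv2, ← hu1, ← hu2]
    · rw [hseα _ _ _ (hαrW v).1 (hαrW v).2 (hβW v).1 (hβW v).2 (hαrW u).1 (hαrW u).2
        (hαrne u v huv),
        hseβ _ _ _ (hαrW v).1 (hαrW v).2 (hβW v).1 (hβW v).2 (hβW u).1 (hβW u).2 (hβne u v huv)]
    · rw [hseβ _ _ _ (hαrW v).1 (hαrW v).2 (hβW v).1 (hβW v).2 (hβW u).1 (hβW u).2 (hβne u v huv),
        hseα _ _ _ (hαrW v).1 (hαrW v).2 (hβW v).1 (hβW v).2 (hαrW u).1 (hαrW u).2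
        (hαrne u v huv)]
      unfold Xor' Xor; tauto
    · rw [hseα' _ _ _ (hαrW v).1 (hαrW v).2 (hβW v).1 (hβW v).2 (hαrW u).1 (hαrW u).2
        (hαrne u v huv),
        hseβ' _ _ _ (hαrW v).1 (hαrW v).2 (hβW v).1 (hβW v).2 (hβW u).1 (hβW u).2 (hβne u v huv)]
      unfold Xor' Xor; tauto
    · rw [hseβ' _ _ _ (hαrW v).1 (hαrW v).2 (hβW v).1 (hβW v).2 (hβW u).1 (hβW u).2 (hβne u v huv),
        hseα' _ _ _ (hαrW v).1 (hαrW v).2 (hβW v).1 (hβW v).2 (hαrW u).1 (hαrW u).2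
        (hαrne u v huv)]
      unfold Xor' Xor; tauto
  -- the reflected representation
  set β' : V → ℝ := fun v => lo + hi + 1 - β v with hβ'
  have hβ'W : ∀ v, hi < β' v ∧ β' v < lo + 1 := by
    intro v; rw [hβ']; dsimp only
    constructor
    · linarith [(hβW v).2]
    · linarith [(hβW v).1]
  have hβ'ne : ∀ u v, u ≠ v → β' u ≠ β' v := by
    intro u v huv h
    rw [hβ'] at h; dsimp only at h
    exact hβne u v huv (by linarith)
  have hβ'lt : ∀ u v, (β' u < β' v ↔ β v < β u) := by
    intro u v; rw [hβ']; dsimp only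
    constructor <;> intro <;> linarith
  have hmemβ' : ∀ v, β' v ∈ Set.Ico lo (lo + 1) :=
    fun v => ⟨by linarith [hlohi, (hβ'W v).1], (hβ'W v).2⟩
  refine ⟨⟨fun v => ((αr v : ℝ) : Circ), fun v => ((β' v : ℝ) : Circ), ?_, ?_⟩⟩
  · intro i j h
    rcases i with u | u <;> rcases j with v | v <;>
      simp only [Sum.elim_inl, Sum.elim_inr] at h
    · have hre := (AddCircle.coe_eq_coe_iff_of_mem_Ico (hmemα u) (hmemα v)).mp h
      have huv : u = v := by
        by_contra hne
        exact hαrne u v hne hre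
      rw [huv]
    · exfalso
      have hre := (AddCircle.coe_eq_coe_iff_of_mem_Ico (hmemα u) (hmemβ' v)).mp h
      linarith [(hαrW u).2, (hβ'W v).1]
    · exfalso
      have hre := (AddCircle.coe_eq_coe_iff_of_mem_Ico (hmemβ' u) (hmemα v)).mp h
      linarith [(hαrW v).2, (hβ'W u).1]
    · have hre := (AddCircle.coe_eq_coe_iff_of_mem_Ico (hmemβ' u) (hmemβ' v)).mp h
      have huv : u = v := by
        by_contra hne
        exact hβ'ne u v hne hre
      rw [huv]
  · intro u v
    by_cases huv : u = v
    · subst huv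
      simp
    · have hnew1 : sbtw ((αr v : ℝ) : Circ) ((αr u : ℝ) : Circ) ((β' v : ℝ) : Circ)
          ↔ αr v < αr u :=
        hseα _ _ _ (hαrW v).1 (hαrW v).2 (hβ'W v).1 (hβ'W v).2 (hαrW u).1 (hαrW u).2
          (hαrne u v huv)
      have hnew2 : sbtw ((αr v : ℝ) : Circ) ((β' u : ℝ) : Circ) ((β' v : ℝ) : Circ)
          ↔ β' u < β' v :=
        hseβ _ _ _ (hαrW v).1 (hαrW v).2 (hβ'W v).1 (hβ'W v).2 (hβ'W u).1 (hβ'W u).2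
          (hβ'ne u v huv)
      have hGc : G.Adj u v ↔ ¬ Gᶜ.Adj u v := by
        rw [G.compl_adj]
        simp [huv]
      rw [hGc, hOld u v huv, and_iff_right huv, hnew1, hnew2, hβ'lt u v,
        lt_iff_not_lt (hβne v u (Ne.symm huv))]
      exact Stmt7Aux.xor_not_right.symm
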